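/- The softmax map from ℝ^n to ℝ^n, defined by softmax(z)_k = e^{z_k} / Σ_j e^{z_j}, is Lipschitz continuous with constant 1/2 with respect to the Euclidean norm: for all z₁, z₂ ∈ ℝ^n, ‖softmax(z₁) − softmax(z₂)‖₂ ≤ (1/2)·‖z₁ − z₂‖₂. Consequently, for any class index y, the gradient of the cross-entropy loss ℓ(·, y) is (1/2)-Lipschitz. -/

import Mathlib

open Real Finset

/-- The softmax map on `ℝ^n` (with the Euclidean norm). -/
noncomputable def softmaxFun (n : ℕ) (z : EuclideanSpace ℝ (Fin n)) : EuclideanSpace ℝ (Fin n) :=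
  (WithLp.equiv 2 (Fin n → ℝ)).symm fun k => Real.exp (z k) / (∑ j, Real.exp (z j))

section aux

variable {n : ℕ}

/-- Key inequality, step A. -/
lemma softmax_stepA (p w : Fin n → ℝ) (hp : ∀ k, 0 ≤ p k) (hs : ∑ k, p k = 1)
    (hw0 : ∑ k, p k * w k = 0) :
    ∑ k, (p k * w k) ^ 2 ≤ (1/2) * ∑ k, p k * w k ^ 2 := by
  by_cases h : ∀ k, p k ≤ 1/2
  · rw [Finset.mul_sum]
    refine Finset.sum_le_sum fun k _ => ?_
    nlinarith [mul_le_mul_of_nonneg_right (h k) (mul_nonneg (hp k) (sq_nonneg (w k)))]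
  · push_neg at h
    obtain ⟨i, hi⟩ := h
    set s := Finset.univ.erase i with hsdef
    have hmem : i ∈ Finset.univ (α := Fin n) := Finset.mem_univ i
    have hsum_split : p i + ∑ k ∈ s, p k = 1 := by
      rw [← hs]; exact Finset.add_sum_erase univ p hmem
    have hw_split : p i * w i + ∑ k ∈ s, p k * w k = 0 := by
      rw [← hw0]; exact Finset.add_sum_erase univ (fun k => p k * w k) hmem
    set A := ∑ k ∈ s, p k with hA
    set T := ∑ k ∈ s, p k * w k ^ 2 with hT
    have hT0 : 0 ≤ T := Finset.sum_nonneg fun k _ => by nlinarith [hp k, sq_nonneg (w k)]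
    have hA0 : 0 ≤ A := Finset.sum_nonneg fun k _ => hp k
    have hA1 : A = 1 - p i := by linarith
    have hCS : (∑ k ∈ s, p k * w k) ^ 2 ≤ A * T := by
      have h1 : ∀ k ∈ s, p k * w k = Real.sqrt (p k) * (Real.sqrt (p k) * w k) := by
        intro k _
        rw [← mul_assoc, Real.mul_self_sqrt (hp k)]
      calc (∑ k ∈ s, p k * w k) ^ 2
          = (∑ k ∈ s, Real.sqrt (p k) * (Real.sqrt (p k) * w k)) ^ 2 := by
            rw [Finset.sum_congr rfl h1]
        _ ≤ (∑ k ∈ s, Real.sqrt (p k) ^ 2) * (∑ k ∈ s, (Real.sqrt (p k) * w k) ^ 2) :=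
            Finset.sum_mul_sq_le_sq_mul_sq _ _ _
        _ = A * T := by
            congr 1
            · exact Finset.sum_congr rfl fun k _ => Real.sq_sqrt (hp k)
            · refine Finset.sum_congr rfl fun k _ => ?_
              rw [mul_pow, Real.sq_sqrt (hp k)]
    have hX : (p i * w i) ^ 2 ≤ A * T := by
      have he : p i * w i = -(∑ k ∈ s, p k * w k) := by linarith
      rw [he, neg_pow]; simpa using hCS
    have hS' : ∑ k ∈ s, (p k * w k) ^ 2 ≤ A * T := by
      rw [hT, Finset.mul_sum]
      refine Finset.sum_le_sum fun k hk => ?_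
      have hpk : p k ≤ A := Finset.single_le_sum (fun j _ => hp j) hk
      nlinarith [mul_le_mul_of_nonneg_right hpk (mul_nonneg (hp k) (sq_nonneg (w k)))]
    have hTot1 : ∑ k, (p k * w k) ^ 2 = (p i * w i) ^ 2 + ∑ k ∈ s, (p k * w k) ^ 2 :=
      (Finset.add_sum_erase univ (fun k => (p k * w k) ^ 2) hmem).symm
    have hTot2 : ∑ k, p k * w k ^ 2 = p i * w i ^ 2 + T :=
      (Finset.add_sum_erase univ (fun k => p k * w k ^ 2) hmem).symm
    rw [hTot1, hTot2]
    have hwi2 : p i * w i ^ 2 ≤ T := by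
      nlinarith [hX, hT0, hi, sq_nonneg (w i), hA1]
    nlinarith [hS', hwi2, hi,
      mul_le_mul_of_nonneg_left hwi2 (show (0:ℝ) ≤ p i - 1/2 by linarith)]

/-- Key inequality, step B (Popoviciu-style bound on the variance). -/
lemma softmax_stepB (hn : 1 ≤ n) (p v : Fin n → ℝ) (hp : ∀ k, 0 ≤ p k)
    (hs : ∑ k, p k = 1) :
    ∑ k, p k * (v k - ∑ j, p j * v j) ^ 2 ≤ (1/2) * ∑ k, (v k) ^ 2 := by
  have hne : (Finset.univ : Finset (Fin n)).Nonempty := by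
    haveI : NeZero n := ⟨by omega⟩
    exact Finset.univ_nonempty
  obtain ⟨i, -, himax⟩ := Finset.exists_max_image univ v hne
  obtain ⟨j, -, hjmin⟩ := Finset.exists_min_image univ v hne
  set m := ∑ k, p k * v k with hm
  set c := (v i + v j) / 2 with hc
  have hshift : ∑ k, p k * (v k - m) ^ 2 = (∑ k, p k * (v k - c) ^ 2) - (m - c) ^ 2 := by
    have e1 : ∀ x : ℝ, ∀ k, p k * (v k - x) ^ 2
        = p k * v k ^ 2 - 2 * x * (p k * v k) + x ^ 2 * p k := by
      intro x k; ring
    have e2 : ∀ x : ℝ, ∑ k, p k * (v k - x) ^ 2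
        = (∑ k, p k * v k ^ 2) - 2 * x * m + x ^ 2 := by
      intro x
      simp only [e1 x]
      rw [Finset.sum_add_distrib, Finset.sum_sub_distrib, ← Finset.mul_sum, ← Finset.mul_sum,
        ← hm, hs, mul_one]
    rw [e2 m, e2 c]; ring
  have hbound : ∑ k, p k * (v k - c) ^ 2 ≤ ((v i - v j) / 2) ^ 2 := by
    calc ∑ k, p k * (v k - c) ^ 2
        ≤ ∑ k, p k * ((v i - v j) / 2) ^ 2 := by
          refine Finset.sum_le_sum fun k _ => ?_
          refine mul_le_mul_of_nonneg_left ?_ (hp k)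
          have h1 : v k - c ≤ (v i - v j) / 2 := by
            have := himax k (Finset.mem_univ k); rw [hc]; linarith
          have h2 : -((v i - v j) / 2) ≤ v k - c := by
            have := hjmin k (Finset.mem_univ k); rw [hc]; linarith
          exact sq_le_sq' h2 h1
      _ = ((v i - v j) / 2) ^ 2 := by rw [← Finset.sum_mul, hs, one_mul]
  have hij : ((v i - v j) / 2) ^ 2 ≤ (1/2) * ∑ k, (v k) ^ 2 := by
    by_cases hij' : i = j
    · subst hij'
      have h0 : ((v i - v i) / 2) ^ 2 = 0 := by ring
      rw [h0]
      positivity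
    · have hpair : v i ^ 2 + v j ^ 2 ≤ ∑ k, (v k) ^ 2 := by
        have := Finset.sum_le_sum_of_subset_of_nonneg
          (Finset.subset_univ ({i, j} : Finset (Fin n)))
          (fun k _ _ => sq_nonneg (v k))
        rwa [Finset.sum_pair hij'] at this
      nlinarith [sq_nonneg (v i + v j)]
  have hsq : 0 ≤ (m - c) ^ 2 := sq_nonneg _
  linarith

/-- Combined key inequality. -/
lemma softmax_keyIneq (hn : 1 ≤ n) (p v : Fin n → ℝ) (hp : ∀ k, 0 ≤ p k)
    (hs : ∑ k, p k = 1) :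
    ∑ k, (p k * (v k - ∑ j, p j * v j)) ^ 2 ≤ (1/4) * ∑ k, (v k) ^ 2 := by
  have hw0 : ∑ k, p k * (v k - ∑ j, p j * v j) = 0 := by
    rw [Finset.sum_congr rfl (fun k _ => by ring :
      ∀ k ∈ univ, p k * (v k - ∑ j, p j * v j) = p k * v k - p k * (∑ j, p j * v j)),
      Finset.sum_sub_distrib, ← Finset.sum_mul, hs, one_mul, sub_self]
  have hA := softmax_stepA p (fun k => v k - ∑ j, p j * v j) hp hs hw0
  have hB := softmax_stepB hn p v hp hs
  calc ∑ k, (p k * (v k - ∑ j, p j * v j)) ^ 2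
      ≤ (1/2) * ∑ k, p k * (v k - ∑ j, p j * v j) ^ 2 := hA
    _ ≤ (1/2) * ((1/2) * ∑ k, (v k) ^ 2) := by linarith
    _ = (1/4) * ∑ k, (v k) ^ 2 := by ring

/-- The Jacobian of softmax as a continuous linear map on plain pi space. -/
noncomputable def smL (n : ℕ) (p : Fin n → ℝ) : (Fin n → ℝ) →L[ℝ] (Fin n → ℝ) :=
  ContinuousLinearMap.pi fun k =>
    p k • (ContinuousLinearMap.proj k
      - ∑ j, p j • ContinuousLinearMap.proj (R := ℝ) (φ := fun _ : Fin n => ℝ) j)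

lemma smL_apply (p : Fin n → ℝ) (v : Fin n → ℝ) (k : Fin n) :
    smL n p v k = p k * (v k - ∑ j, p j * v j) := by
  simp [smL, ContinuousLinearMap.sum_apply, smul_eq_mul]

lemma hasFDerivAt_softmax_pi (hn : 1 ≤ n) (z : Fin n → ℝ) :
    HasFDerivAt (fun u : Fin n → ℝ => fun k => Real.exp (u k) / ∑ j, Real.exp (u j))
      (smL n (fun k => Real.exp (z k) / ∑ j, Real.exp (z j))) z := by
  haveI : NeZero n := ⟨by omega⟩
  have hS : (0:ℝ) < ∑ j, Real.exp (z j) :=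
    Finset.sum_pos (fun j _ => Real.exp_pos _) Finset.univ_nonempty
  apply hasFDerivAt_pi.2
  intro k
  have hnum : HasFDerivAt (fun u : Fin n → ℝ => Real.exp (u k))
      (Real.exp (z k) • ContinuousLinearMap.proj k) z :=
    (hasFDerivAt_apply k z).exp
  have hden : HasFDerivAt (fun u : Fin n → ℝ => ∑ j, Real.exp (u j))
      (∑ j, Real.exp (z j) • ContinuousLinearMap.proj (R := ℝ) (φ := fun _ : Fin n => ℝ) j) z :=
    HasFDerivAt.fun_sum fun j _ => (hasFDerivAt_apply j z).exp
  have hinv : HasFDerivAt (fun u : Fin n → ℝ => (∑ j, Real.exp (u j))⁻¹)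
      ((-(ContinuousLinearMap.mulLeftRight ℝ ℝ (∑ j, Real.exp (z j))⁻¹
          (∑ j, Real.exp (z j))⁻¹)).comp
        (∑ j, Real.exp (z j) • ContinuousLinearMap.proj (R := ℝ) (φ := fun _ : Fin n => ℝ) j)) z :=
    (hasFDerivAt_inv' (𝕜 := ℝ) hS.ne').comp z hden
  have h := hnum.mul hinv
  have heq : (fun u : Fin n → ℝ => Real.exp (u k) / ∑ j, Real.exp (u j))
      = fun u => Real.exp (u k) * (∑ j, Real.exp (u j))⁻¹ := by
    funext u; rw [div_eq_mul_inv]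
  rw [heq]
  refine h.congr_fderiv ?_
  refine ContinuousLinearMap.ext fun v => ?_
  have hsum : ∑ x, (Real.exp (z x) / ∑ j, Real.exp (z j)) * v x
      = (∑ x, Real.exp (z x) * v x) / ∑ j, Real.exp (z j) := by
    rw [Finset.sum_div]; exact Finset.sum_congr rfl fun x _ => by ring
  simp only [smL, ContinuousLinearMap.pi_apply, ContinuousLinearMap.add_apply,
    ContinuousLinearMap.comp_apply, ContinuousLinearMap.neg_apply,
    ContinuousLinearMap.mulLeftRight_apply, ContinuousLinearMap.smul_apply,
    ContinuousLinearMap.sub_apply, ContinuousLinearMap.sum_apply,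
    ContinuousLinearMap.proj_apply, smul_eq_mul, hsum]
  field_simp
  ring

end aux

section main

variable {n : ℕ}

noncomputable def eqL (n : ℕ) : EuclideanSpace ℝ (Fin n) ≃L[ℝ] (Fin n → ℝ) :=
  PiLp.continuousLinearEquiv 2 ℝ (fun _ : Fin n => ℝ)

/-- softmax Jacobian on Euclidean space. -/
noncomputable def smD (n : ℕ) (p : Fin n → ℝ) :
    EuclideanSpace ℝ (Fin n) →L[ℝ] EuclideanSpace ℝ (Fin n) :=
  ((eqL n).symm : (Fin n → ℝ) →L[ℝ] EuclideanSpace ℝ (Fin n)).comp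
    ((smL n p).comp ((eqL n) : EuclideanSpace ℝ (Fin n) →L[ℝ] (Fin n → ℝ)))

lemma smD_apply (p : Fin n → ℝ) (v : EuclideanSpace ℝ (Fin n)) (k : Fin n) :
    smD n p v k = p k * (v k - ∑ j, p j * v j) := by
  simp only [smD, ContinuousLinearMap.comp_apply, ContinuousLinearEquiv.coe_coe]
  exact smL_apply p ((eqL n) v) k

lemma hasFDerivAt_softmaxFun (hn : 1 ≤ n) (z : EuclideanSpace ℝ (Fin n)) :
    HasFDerivAt (softmaxFun n)
      (smD n (fun k => Real.exp (z k) / ∑ j, Real.exp (z j))) z := by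
  have h0 : softmaxFun n = fun z => (eqL n).symm
      ((fun u : Fin n → ℝ => fun k => Real.exp (u k) / ∑ j, Real.exp (u j)) ((eqL n) z)) := rfl
  rw [h0]
  exact ((eqL n).symm.hasFDerivAt).comp z
    ((hasFDerivAt_softmax_pi hn ((eqL n) z)).comp z ((eqL n).hasFDerivAt))

lemma softmax_nonneg (z : EuclideanSpace ℝ (Fin n)) (k : Fin n) :
    0 ≤ Real.exp (z k) / ∑ j, Real.exp (z j) := by
  have : (0:ℝ) ≤ ∑ j, Real.exp (z j) :=
    Finset.sum_nonneg fun j _ => (Real.exp_pos _).le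
  positivity

lemma softmax_sum_one (hn : 1 ≤ n) (z : EuclideanSpace ℝ (Fin n)) :
    ∑ k, Real.exp (z k) / ∑ j, Real.exp (z j) = 1 := by
  haveI : NeZero n := ⟨by omega⟩
  have hS : (0:ℝ) < ∑ j, Real.exp (z j) :=
    Finset.sum_pos (fun j _ => Real.exp_pos _) Finset.univ_nonempty
  rw [← Finset.sum_div, div_self hS.ne']

lemma smD_norm_le (hn : 1 ≤ n) (p : Fin n → ℝ) (hp : ∀ k, 0 ≤ p k)
    (hs : ∑ k, p k = 1) : ‖smD n p‖ ≤ 1/2 := by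
  refine ContinuousLinearMap.opNorm_le_bound _ (by norm_num) fun v => ?_
  rw [EuclideanSpace.norm_eq, EuclideanSpace.norm_eq]
  have hkey := softmax_keyIneq hn p (fun k => v k) hp hs
  have hrw : ∀ x : EuclideanSpace ℝ (Fin n), ∑ i, ‖x i‖ ^ 2 = ∑ i, (x i) ^ 2 := by
    intro x
    exact Finset.sum_congr rfl fun i _ => by rw [Real.norm_eq_abs, sq_abs]
  rw [hrw, hrw]
  have h1 : ∑ i, (smD n p v i) ^ 2 = ∑ i, (p i * (v i - ∑ j, p j * v j)) ^ 2 :=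
    Finset.sum_congr rfl fun i _ => by rw [smD_apply]
  rw [h1]
  have hhalf : (1/2 : ℝ) * Real.sqrt (∑ i, (v i) ^ 2)
      = Real.sqrt ((1/4) * ∑ i, (v i) ^ 2) := by
    rw [Real.sqrt_mul (by norm_num : (0:ℝ) ≤ 1/4)]
    congr 1
    rw [show (1/4:ℝ) = (1/2)^2 by norm_num, Real.sqrt_sq (by norm_num : (0:ℝ) ≤ 1/2)]
  rw [hhalf]
  exact Real.sqrt_le_sqrt hkey

theorem softmaxFun_lipschitz (hn : 1 ≤ n) : LipschitzWith (1/2) (softmaxFun n) := by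
  apply lipschitzWith_of_nnnorm_fderiv_le
    (fun z => (hasFDerivAt_softmaxFun hn z).differentiableAt)
  intro z
  rw [(hasFDerivAt_softmaxFun hn z).fderiv]
  rw [← NNReal.coe_le_coe, coe_nnnorm]
  have : ((1/2 : NNReal) : ℝ) = 1/2 := by norm_num
  rw [this]
  exact smD_norm_le hn _ (softmax_nonneg z) (softmax_sum_one hn z)

end main

/-- The softmax map is `1/2`-Lipschitz in the Euclidean norm; consequently, for every class
index `y`, the gradient of the cross-entropy loss `ℓ(·, y)` is `1/2`-Lipschitz. -/
theorem stmt14 (n : ℕ) (hn : 1 ≤ n) :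
    LipschitzWith (1 / 2) (softmaxFun n) ∧
    ∀ y : Fin n,
      LipschitzWith (1 / 2)
        (gradient fun z : EuclideanSpace ℝ (Fin n) =>
          Real.log (∑ j, Real.exp (z j)) - z y) := by
  constructor
  · exact softmaxFun_lipschitz hn
  · intro y
    haveI : NeZero n := ⟨by omega⟩
    -- the gradient is softmax minus the basis vector
    have hgrad : ∀ z : EuclideanSpace ℝ (Fin n),
        HasGradientAt (fun z : EuclideanSpace ℝ (Fin n) =>
          Real.log (∑ j, Real.exp (z j)) - z y)
          (softmaxFun n z - EuclideanSpace.single y 1) z := by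
      intro z
      have hS : (0:ℝ) < ∑ j, Real.exp (z j) :=
        Finset.sum_pos (fun j _ => Real.exp_pos _) Finset.univ_nonempty
      have hden : HasFDerivAt (fun u : Fin n → ℝ => ∑ j, Real.exp (u j))
          (∑ j, Real.exp (z j) • ContinuousLinearMap.proj (R := ℝ) (φ := fun _ : Fin n => ℝ) j)
          ((eqL n) z) :=
        HasFDerivAt.fun_sum fun j _ => (hasFDerivAt_apply j _).exp
      have hlog := hden.log hS.ne'
      have hy : HasFDerivAt (fun u : Fin n → ℝ => u y)
          (ContinuousLinearMap.proj (R := ℝ) (φ := fun _ : Fin n => ℝ) y) ((eqL n) z) :=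
        hasFDerivAt_apply y _
      have hpi := hlog.sub hy
      have hcomp := hpi.comp z ((eqL n).hasFDerivAt)
      rw [hasGradientAt_iff_hasFDerivAt]
      refine hcomp.congr_fderiv ?_
      refine ContinuousLinearMap.ext fun v => ?_
      rw [InnerProductSpace.toDual_apply_apply]
      rw [PiLp.inner_apply]
      simp only [ContinuousLinearMap.comp_apply, ContinuousLinearEquiv.coe_coe,
        ContinuousLinearMap.sub_apply, ContinuousLinearMap.smul_apply,
        ContinuousLinearMap.sum_apply, ContinuousLinearMap.proj_apply, smul_eq_mul,
        RCLike.inner_apply, conj_trivial]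
      have hterm : ∀ i, ((softmaxFun n z - EuclideanSpace.single y 1 :
            EuclideanSpace ℝ (Fin n))) i * v i
          = (Real.exp (z i) / ∑ j, Real.exp (z j)) * v i
            - (if i = y then (1:ℝ) else 0) * v i := by
        intro i
        have : ((softmaxFun n z - EuclideanSpace.single y 1 :
              EuclideanSpace ℝ (Fin n))) i
            = (Real.exp (z i) / ∑ j, Real.exp (z j)) - (if i = y then (1:ℝ) else 0) := by
          simp [softmaxFun, EuclideanSpace.single_apply]
        rw [this]; ring
      rw [Finset.sum_congr rfl fun i _ => (mul_comm _ _).trans (hterm i), Finset.sum_sub_distrib]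
      have h2 : ∑ i, (if i = y then (1:ℝ) else 0) * v i = v y := by
        rw [Finset.sum_eq_single y]
        · simp
        · intro b _ hb; simp [hb]
        · intro hb; exact absurd (Finset.mem_univ y) hb
      rw [h2]
      have hv : ∀ i, (eqL n) v i = v i := fun _ => rfl
      have hz : ∀ i, (eqL n) z i = z i := fun _ => rfl
      simp only [hv, hz]
      congr 1
      rw [Finset.mul_sum]
      refine Finset.sum_congr rfl fun i _ => ?_
      rw [div_mul_eq_mul_div, div_eq_inv_mul]
    have hfun : (gradient fun z : EuclideanSpace ℝ (Fin n) =>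
        Real.log (∑ j, Real.exp (z j)) - z y)
        = fun z => softmaxFun n z - EuclideanSpace.single y 1 := by
      funext z
      exact (hgrad z).gradient
    rw [hfun]
    have h1 := softmaxFun_lipschitz (n := n) hn
    exact LipschitzWith.of_dist_le_mul fun a b => by
      rw [dist_sub_right]
      exact LipschitzWith.dist_le_mul h1 a b
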